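/- Let G be a topological group, 𝒜 a unital left-translation-invariant C*-subalgebra of the bounded continuous functions on G, and T ⊆ G a right uniformly discrete set such that disjoint subsets of T have disjoint closures in the spectrum G^𝒜 of 𝒜 (via the evaluation map). Then every bounded function on T extends to a continuous function on the closure of T in G^𝒜; in particular T is an 𝒜-interpolation set. -/

import Mathlib

open Pointwise

/-- An abstract model of the compactification `G^𝒜` associated to a unital
left-translation-invariant C*-subalgebra `A` of `CB(G)`: a compact Hausdorff space `X` together
with the (dense-range) evaluation map `ε : G → X`, the natural left action of `G` on `X`
(`(ε(s)x)(f) = x(ₛf)`), and the Gelfand correspondence identifying `A` with `C(X)`. -/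
structure GCompactification (G : Type*) [TopologicalSpace G] [Group G]
    (A : Set (G → ℂ)) (X : Type*) [TopologicalSpace X] [CompactSpace X] [T2Space X] where
  eps : G → X
  dense : DenseRange eps
  act : G → X → X
  act_eps : ∀ s t : G, act s (eps t) = eps (s * t)
  act_mul : ∀ s t : G, ∀ x : X, act (s * t) x = act s (act t x)
  act_cont : ∀ s : G, Continuous (act s)
  gelfand : (G → ℂ) → (X → ℂ)
  gelfand_cont : ∀ f ∈ A, Continuous (gelfand f)
  gelfand_eps : ∀ f ∈ A, ∀ s : G, gelfand f (eps s) = f s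
  mem_of_cont : ∀ φ : X → ℂ, Continuous φ → (fun s => φ (eps s)) ∈ A

/-- The semigroup compactification `G^𝒜` of an admissible subalgebra `A`: additionally `X` carries
an associative multiplication which is right topological, extends that of `G`, and restricts to
the action of `G`. -/
structure GSemigroupCompactification (G : Type*) [TopologicalSpace G] [Group G]
    (A : Set (G → ℂ)) (X : Type*) [TopologicalSpace X] [CompactSpace X] [T2Space X]
    extends GCompactification G A X where
  mul : X → X → X
  mul_assoc : ∀ x y z : X, mul (mul x y) z = mul x (mul y z)
  right_cont : ∀ y : X, Continuous fun x => mul x y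
  eps_act : ∀ (s : G) (x : X), mul (eps s) x = act s x

/-- `T` is an `𝒜`-set: for every open neighbourhood `U` of `e` there is an open neighbourhood `V`
of `e` with `closure V ⊆ U` such that for each `T₁ ⊆ T` some `h ∈ A` is `1` on `VT₁` and `0` off
`UT₁`. -/
def IsASet {G : Type*} [TopologicalSpace G] [Group G] (A : Set (G → ℂ)) (T : Set G) : Prop :=
  ∀ U : Set G, IsOpen U → (1 : G) ∈ U →
    ∃ V : Set G, IsOpen V ∧ (1 : G) ∈ V ∧ closure V ⊆ U ∧
      ∀ T₁ ⊆ T, ∃ h ∈ A, (∀ x ∈ V * T₁, h x = 1) ∧ (∀ x ∉ U * T₁, h x = 0)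

/-- Right translation-compact subsets of a topological group. -/
def RightTranslationCompact {G : Type*} [Group G] [TopologicalSpace G] (T : Set G) : Prop :=
  ∀ L : Set G, ¬ IsCompact (closure L) →
    ∃ F : Set G, F ⊆ L ∧ F.Finite ∧ IsCompact (closure (⋂ b ∈ F, (b * ·) ⁻¹' T))

/-- Proposition 3.3: if `T` is right uniformly discrete and disjoint subsets of `T` have disjoint
closures in `G^𝒜`, then every bounded function on `T` extends to a continuous function on the
closure of `ε(T)` (equivalently, on all of `G^𝒜`); in particular `T` is an `𝒜`-interpolation
set. -/
theorem interpolation_of_disjoint_closures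
    {G : Type*} [TopologicalSpace G] [Group G] [IsTopologicalGroup G]
    (A : Set (G → ℂ)) {X : Type*} [TopologicalSpace X] [CompactSpace X] [T2Space X]
    (C : GCompactification G A X)
    (hone : (fun _ : G => (1 : ℂ)) ∈ A)
    (hlinv : ∀ f ∈ A, ∀ s : G, (fun t => f (s * t)) ∈ A)
    (T U : Set G) (hU : U ∈ nhds (1 : G))
    (hdisc : ∀ t ∈ T, ∀ t' ∈ T, t ≠ t' → Disjoint (U * ({t} : Set G)) (U * ({t'} : Set G)))
    (hsep : ∀ T₁ T₂ : Set G, T₁ ⊆ T → T₂ ⊆ T → Disjoint T₁ T₂ →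
      Disjoint (closure (C.eps '' T₁)) (closure (C.eps '' T₂))) :
    ∀ g : G → ℂ, (∃ M : ℝ, ∀ t ∈ T, ‖g t‖ ≤ M) →
      (∃ φ : X → ℂ, Continuous φ ∧ ∀ t ∈ T, φ (C.eps t) = g t) ∧
      (∃ f ∈ A, ∀ t ∈ T, f t = g t) := by
  rintro g ⟨M, hM⟩
  classical
  set f : ↥T → X := fun t => C.eps ↑t with hf
  set β : Ultrafilter ↥T → X := Ultrafilter.extend f with hβ
  have hβc : Continuous β := continuous_ultrafilter_extend f
  have hβpure : ∀ t : ↥T, β (pure t) = C.eps ↑t := fun t =>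
    congrFun (ultrafilter_extend_extends f) t
  have key : ∀ (u : Ultrafilter ↥T) (S : Set ↥T), S ∈ u →
      β u ∈ closure (C.eps '' (Subtype.val '' S)) := by
    intro u S hS
    have hten : Filter.Tendsto f (↑u) (nhds (β u)) :=
      ultrafilter_extend_eq_iff.mp rfl
    refine mem_closure_of_tendsto hten ?_
    filter_upwards [hS] with t ht
    exact ⟨↑t, ⟨t, ht, rfl⟩, rfl⟩
  have hβinj : Function.Injective β := by
    intro u v huv
    by_contra hne
    obtain ⟨S, hSu, hSv⟩ : ∃ S, S ∈ u ∧ S ∉ v := by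
      by_contra h
      push_neg at h
      exact hne (Ultrafilter.eq_of_le (Filter.le_def.mpr h)).symm
    have h1 := key u S hSu
    have h2 := key v Sᶜ (Ultrafilter.compl_mem_iff_notMem.mpr hSv)
    have hdj : Disjoint (Subtype.val '' S) (Subtype.val '' Sᶜ : Set G) :=
      (Set.disjoint_image_iff Subtype.val_injective).mpr disjoint_compl_right
    have h3 := hsep (Subtype.val '' S) (Subtype.val '' Sᶜ)
      (by rintro x ⟨t, _, rfl⟩; exact t.2) (by rintro x ⟨t, _, rfl⟩; exact t.2) hdj
    rw [huv] at h1
    exact Set.disjoint_left.mp h3 h1 h2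
  -- bounded extension into a closed ball
  set M' : ℝ := max M 0 with hM'
  set K : Set ℂ := Metric.closedBall 0 M' with hK
  haveI : CompactSpace K := isCompact_iff_compactSpace.mp (isCompact_closedBall 0 M')
  have hmem : ∀ t : ↥T, g ↑t ∈ K := by
    intro t
    simp only [hK, Metric.mem_closedBall, dist_zero_right]
    exact le_trans (hM ↑t t.2) (le_max_left _ _)
  set g' : ↥T → K := fun t => ⟨g ↑t, hmem t⟩ with hg'
  set gext : Ultrafilter ↥T → K := Ultrafilter.extend g' with hgext
  have hgextc : Continuous gext := continuous_ultrafilter_extend g'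
  have hgextpure : ∀ t : ↥T, gext (pure t) = g' t := fun t =>
    congrFun (ultrafilter_extend_extends g') t
  set ψ : C(Ultrafilter ↥T, ℂ) := ⟨fun u => (gext u : ℂ), continuous_subtype_val.comp hgextc⟩
  have hemb : Topology.IsClosedEmbedding β := hβc.isClosedEmbedding hβinj
  obtain ⟨φ, hφ⟩ := ψ.exists_extension hemb
  have hφT : ∀ t ∈ T, φ (C.eps t) = g t := by
    intro t ht
    have : φ (β (pure ⟨t, ht⟩)) = ψ (pure ⟨t, ht⟩) := ContinuousMap.congr_fun hφ _
    rw [hβpure ⟨t, ht⟩] at this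
    simpa [ψ, hgextpure ⟨t, ht⟩, hg'] using this
  refine ⟨⟨φ, φ.continuous, hφT⟩, ⟨fun s => φ (C.eps s), C.mem_of_cont _ φ.continuous, hφT⟩⟩
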